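/- If G is a graph with a perfect matching M such that the subgraph of G induced by the vertices covered by a subset M' ⊆ M contains no M-alternating cycle, then that induced subgraph has a unique perfect matching, and consequently M ∖ M' is a forcing set of M. -/

import Mathlib

open SimpleGraph

variable {V : Type*}

/-- `S` is a forcing set of the perfect matching `M` of `G`: a subset of the edges of `M`
contained in no other perfect matching of `G`. -/
def IsForcingSet (G : SimpleGraph V) (M : G.Subgraph) (S : Set (Sym2 V)) : Prop :=
  S ⊆ M.edgeSet ∧ ∀ M' : G.Subgraph, M'.IsPerfectMatching → S ⊆ M'.edgeSet → M' = M

/-- The forcing number of a perfect matching: minimum size of a forcing set. -/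
noncomputable def forcingNum (G : SimpleGraph V) (M : G.Subgraph) : ℕ :=
  sInf {k | ∃ S : Set (Sym2 V), IsForcingSet G M S ∧ S.ncard = k}

/-- The maximum forcing number of `G`. -/
noncomputable def maxForcingNum (G : SimpleGraph V) : ℕ :=
  sSup {k | ∃ M : G.Subgraph, M.IsPerfectMatching ∧ forcingNum G M = k}

/-- The edges of the list `l`, read cyclically, alternate in and out of the edge set `M`. -/
def CyclicAlt (M : Set (Sym2 V)) (l : List (Sym2 V)) : Prop :=
  (l ++ l.take 1).Chain' (fun e f => (e ∈ M) ↔ (f ∉ M))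

open scoped symmDiff

section Helpers

lemma symmDiff_isAlternating {G G' : SimpleGraph V} {M : G.Subgraph} {N : G'.Subgraph}
    (hM : M.IsPerfectMatching) (hN : N.IsPerfectMatching) :
    (M.spanningCoe ∆ N.spanningCoe).IsAlternating M.spanningCoe := by
  intro v w w' hne h1 h2
  have hMu : ∀ x y, M.Adj v x → M.Adj v y → x = y :=
    fun x y hx hy => ((hM.1 (hM.2 v)).unique hx hy)
  have hNu : ∀ x y, N.Adj v x → N.Adj v y → x = y :=
    fun x y hx hy => ((hN.1 (hN.2 v)).unique hx hy)
  simp only [symmDiff_def, sup_adj, sdiff_adj, Subgraph.spanningCoe_adj] at h1 h2 ⊢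
  rcases h1 with ⟨h1M, h1N⟩ | ⟨h1N, h1M⟩ <;> rcases h2 with ⟨h2M, h2N⟩ | ⟨h2N, h2M⟩
  · exact absurd (hMu _ _ h1M h2M) hne
  · simp [h1M, h2M]
  · simp [h1M, h2M]
  · exact absurd (hNu _ _ h1N h2N) hne

lemma alt_pair {H F : SimpleGraph V} (halt : H.IsAlternating F) {v a b : V}
    (ha : H.Adj v a) (hb : H.Adj v b) (hne : a ≠ b) :
    (s(v,a) ∈ F.edgeSet ↔ s(v,b) ∉ F.edgeSet) := by
  simpa [mem_edgeSet] using halt hne ha hb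

lemma edges_getElem_eq {H : SimpleGraph V} {u v : V} (p : H.Walk u v) :
    ∀ i (hi : i < p.length), p.edges[i]'(p.length_edges.symm ▸ hi) =
      s(p.getVert i, p.getVert (i+1)) := by
  induction p with
  | nil => intro i hi; simp at hi
  | cons h q ih =>
    intro i hi
    cases i with
    | zero => simp [Walk.getVert_zero, Walk.getVert_cons_succ]
    | succ j =>
      simp only [Walk.edges_cons, List.getElem_cons_succ, Walk.getVert_cons_succ]
      exact ih j (by simpa using hi)

lemma isCycle_cyclicAlt {H F : SimpleGraph V} (halt : H.IsAlternating F)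
    {x : V} {c : H.Walk x x} (hc : c.IsCycle) : CyclicAlt F.edgeSet c.edges := by
  have h3 : 3 ≤ c.length := hc.three_le_length
  have hnodup : c.edges.Nodup := hc.edges_nodup
  have hel : c.edges.length = c.length := c.length_edges
  set n := c.length with hn
  have hlen' : (c.edges ++ c.edges.take 1).length = n + 1 := by
    simp only [List.length_append, List.length_take, hel]
    omega
  have main : ∀ i j (hi : i < n) (hj : j < n), i ≠ j → c.getVert (i+1) = c.getVert j →
      ((c.edges[i]'(by omega) ∈ F.edgeSet) ↔ (c.edges[j]'(by omega) ∉ F.edgeSet)) := by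
    intro i j hi hj hij hvij
    rw [edges_getElem_eq c i hi, edges_getElem_eq c j hj, ← hvij]
    rw [Sym2.eq_swap (a := c.getVert i)]
    refine alt_pair halt (c.adj_getVert_succ hi).symm
      (hvij ▸ c.adj_getVert_succ hj) ?_
    intro hcon
    apply hij
    have : c.edges[i]'(by omega) = c.edges[j]'(by omega) := by
      rw [edges_getElem_eq c i hi, edges_getElem_eq c j hj, ← hvij, hcon, Sym2.eq_swap]
    exact hnodup.getElem_inj_iff.mp this
  rw [CyclicAlt, List.Chain', List.isChain_iff_getElem]
  intro i hi
  rw [hlen'] at hi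
  rcases Nat.lt_or_ge (i+1) n with hlt | hge
  · rw [List.getElem_append_left (by omega), List.getElem_append_left (by omega)]
    exact main i (i+1) (by omega) hlt (by omega) rfl
  · have hin : i + 1 = n := by omega
    rw [List.getElem_append_left (by omega), List.getElem_append_right (by omega)]
    have h0 : (c.edges.take 1)[i + 1 - c.edges.length]'(by simp [hel]; omega) =
        c.edges[0]'(by omega) := by
      simp only [List.getElem_take, show i + 1 - c.length = 0 from by omega,
        show i + 1 - c.edges.length = 0 from by omega]
    rw [h0]
    refine main i 0 (by omega) (by omega) (by omega) ?_
    rw [hin, Walk.getVert_length, Walk.getVert_zero]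

lemma exists_cycle_of_isCycles [Fintype V] {H : SimpleGraph V} (hH : H.IsCycles)
    {u v : V} (huv : H.Adj u v) : ∃ (x : V) (c : H.Walk x x), c.IsCycle := by
  classical
  let L : Set ℕ := {n | ∃ (a b : V) (p : H.Walk a b), p.IsPath ∧ p.length = n}
  have h1L : 1 ∈ L :=
    ⟨u, v, Walk.cons huv Walk.nil, by simp [Walk.cons_isPath_iff, huv.ne], by simp⟩
  have hbdd : BddAbove L := ⟨Fintype.card V, by rintro n ⟨a, b, p, hp, rfl⟩; exact hp.length_lt.le⟩
  obtain ⟨a, w, p, hp, hlen⟩ := Nat.sSup_mem ⟨1, h1L⟩ hbdd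
  have hmax : ∀ (a' b' : V) (q : H.Walk a' b'), q.IsPath → q.length ≤ sSup L :=
    fun a' b' q hq => le_csSup hbdd ⟨a', b', q, hq, rfl⟩
  have h1 : 1 ≤ p.length := by rw [hlen]; exact le_csSup hbdd h1L
  have hrnil : ¬ p.reverse.Nil := by
    rw [Walk.nil_iff_length_eq, Walk.length_reverse]; omega
  obtain ⟨t, hwt, q, hq⟩ := Walk.not_nil_iff.mp hrnil
  have huniq : ∀ z, s(w, z) ∈ p.edges → z = t := by
    intro z hz
    have hz' : s(w, z) ∈ p.reverse.edges := by rw [Walk.edges_reverse]; simpa using hz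
    rw [hq, Walk.edges_cons] at hz'
    rcases List.mem_cons.mp hz' with h | h
    · rcases Sym2.eq_iff.mp h with ⟨_, rfl⟩ | ⟨h1', h2'⟩
      · rfl
      · exact absurd h1' hwt.ne
    · exfalso
      have hw : w ∈ q.support := Walk.fst_mem_support_of_mem_edges q h
      have hrp : p.reverse.IsPath := hp.reverse
      rw [hq, Walk.cons_isPath_iff] at hrp
      exact hrp.2 hw
  obtain ⟨c1, c2, hc12, hset⟩ := Set.ncard_eq_two.mp (hH ⟨t, hwt⟩)
  have hc1 : H.Adj w c1 := by rw [← SimpleGraph.mem_neighborSet, hset]; simp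
  have hc2 : H.Adj w c2 := by rw [← SimpleGraph.mem_neighborSet, hset]; simp
  obtain ⟨y, hwy, hyt⟩ : ∃ y, H.Adj w y ∧ y ≠ t := by
    by_cases h : c1 = t
    · exact ⟨c2, hc2, fun hh => hc12 (h ▸ hh ▸ rfl)⟩
    · exact ⟨c1, hc1, h⟩
  have hynotedge : s(w, y) ∉ p.edges := fun hcon => hyt (huniq y hcon)
  by_cases hys : y ∈ p.support
  · refine ⟨w, Walk.cons hwy (p.dropUntil y hys), ?_⟩
    exact Path.cons_isCycle ⟨p.dropUntil y hys, hp.dropUntil hys⟩ hwy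
      (fun hcon => hynotedge (Walk.edges_dropUntil_subset p hys hcon))
  · exfalso
    have hext : (Walk.cons hwy.symm p.reverse).IsPath := by
      rw [Walk.cons_isPath_iff]
      exact ⟨hp.reverse, by rwa [Walk.support_reverse, List.mem_reverse]⟩
    have h2 := hmax _ _ _ hext
    rw [Walk.length_cons, Walk.length_reverse, hlen] at h2
    omega

lemma exists_cycle_of_ne {G : SimpleGraph V} [Fintype V] {P Q : G.Subgraph}
    (hP : P.IsPerfectMatching) (hQ : Q.IsPerfectMatching) (hne : Q ≠ P) :
    ∃ (x : V) (c : (Q.spanningCoe ∆ P.spanningCoe).Walk x x), c.IsCycle := by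
  have hverts : Q.verts = P.verts := by
    rw [Subgraph.isSpanning_iff.mp hQ.2, Subgraph.isSpanning_iff.mp hP.2]
  have hadj : ∃ a b, ¬ (Q.Adj a b ↔ P.Adj a b) := by
    by_contra h
    push_neg at h
    exact hne (Subgraph.ext hverts (by ext a b; exact h a b))
  obtain ⟨a, b, hab⟩ := hadj
  have hD : (Q.spanningCoe ∆ P.spanningCoe).Adj a b := by
    simp only [symmDiff_def, sup_adj, sdiff_adj, Subgraph.spanningCoe_adj]
    tauto
  exact exists_cycle_of_isCycles
    (Subgraph.IsPerfectMatching.symmDiff_isCycles hQ hP) hD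

lemma spanningCoe_edgeSet {G : SimpleGraph V} (M : G.Subgraph) :
    M.spanningCoe.edgeSet = M.edgeSet := by
  ext e
  induction e using Sym2.ind with
  | _ a b => simp [Subgraph.mem_edgeSet]

lemma symmDiff_le' {a b c : SimpleGraph V} (h1 : a ≤ c) (h2 : b ≤ c) : a ∆ b ≤ c := by
  rw [symmDiff_def]
  exact sup_le (sdiff_le.trans h1) (sdiff_le.trans h2)

end Helpers

/-- no alternating cycle on `V(M')` gives a unique perfect matching there,
and `M \ M'` is a forcing set of `M`. -/
theorem stmt2 (G : SimpleGraph V) [Fintype V] (M : G.Subgraph)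
    (hM : M.IsPerfectMatching) (M' : Set (Sym2 V)) (hM' : M' ⊆ M.edgeSet)
    (S : Set V) (hS : S = {v | ∃ e ∈ M', v ∈ e})
    (hno : ¬ ∃ (v : V) (w : G.Walk v v), w.IsCycle ∧ (∀ x ∈ w.support, x ∈ S) ∧
      CyclicAlt M.edgeSet w.edges) :
    (∃! N : (SimpleGraph.induce S G).Subgraph, N.IsPerfectMatching) ∧
      IsForcingSet G M (M.edgeSet \ M') := by
  classical
  have hpartner : ∀ v, v ∈ S → ∃ w, M.Adj v w ∧ s(v, w) ∈ M' := by
    intro v hv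
    rw [hS] at hv
    obtain ⟨e, heM', hve⟩ := hv
    obtain ⟨w, rfl⟩ := Sym2.mem_iff_exists.mp hve
    exact ⟨w, Subgraph.mem_edgeSet.mp (hM' heM'), heM'⟩
  have hMS : ∀ v w, v ∈ S → M.Adj v w → s(v, w) ∈ M' ∧ w ∈ S := by
    intro v w hv hvw
    obtain ⟨w', hvw', hw'⟩ := hpartner v hv
    obtain rfl : w = w' := (hM.1 (hM.2 v)).unique hvw hvw'
    refine ⟨hw', ?_⟩
    rw [hS]
    exact ⟨s(v, w), hw', Sym2.mem_mk_right v w⟩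
  -- the canonical perfect matching of the induced subgraph
  let N₀ : (SimpleGraph.induce S G).Subgraph :=
    { verts := Set.univ
      Adj := fun a b => M.Adj a b
      adj_sub := fun {a b} h => M.adj_sub h
      edge_vert := fun _ => Set.mem_univ _
      symm := ⟨fun a b h => M.adj_symm h⟩ }
  have hN₀adj : ∀ a b : S, N₀.Adj a b ↔ M.Adj a b := fun a b => Iff.rfl
  have hN₀pm : N₀.IsPerfectMatching := by
    constructor
    · rintro ⟨v, hv⟩ _
      obtain ⟨w, hvw, hw'⟩ := hpartner v hv
      have hwS : w ∈ S := (hMS v w hv hvw).2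
      refine ⟨⟨w, hwS⟩, hvw, ?_⟩
      rintro ⟨y, hy⟩ hadj
      exact Subtype.ext ((hM.1 (hM.2 v)).unique hadj hvw)
    · intro a
      exact Set.mem_univ a
  have huniq : ∀ N : (SimpleGraph.induce S G).Subgraph, N.IsPerfectMatching → N = N₀ := by
    intro N hN
    by_contra hne
    obtain ⟨x, c, hc⟩ := exists_cycle_of_ne hN₀pm hN hne
    have halt : (N.spanningCoe ∆ N₀.spanningCoe).IsAlternating N₀.spanningCoe := by
      have h := symmDiff_isAlternating hN₀pm hN
      rwa [symmDiff_comm] at h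
    have hca : CyclicAlt N₀.spanningCoe.edgeSet c.edges := isCycle_cyclicAlt halt hc
    have hle : N.spanningCoe ∆ N₀.spanningCoe ≤ SimpleGraph.induce S G :=
      symmDiff_le' N.spanningCoe_le N₀.spanningCoe_le
    let c₁ := c.transfer (SimpleGraph.induce S G)
      (fun e he => (SimpleGraph.edgeSet_mono hle) (c.edges_subset_edgeSet he))
    have hc₁ : c₁.IsCycle := hc.transfer _
    let emb : (SimpleGraph.induce S G) ↪g G := SimpleGraph.Embedding.induce S
    let c₂ := (c₁.map emb.toHom)
    have hc₂ : c₂.IsCycle := hc₁.map emb.injective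
    refine hno ⟨_, c₂, hc₂, ?_, ?_⟩
    · intro y hy
      rw [Walk.support_map] at hy
      obtain ⟨z, hz, rfl⟩ := List.mem_map.mp hy
      exact z.2
    · have hedges : c₂.edges = c.edges.map (Sym2.map (Subtype.val)) := by
        show (c₁.map emb.toHom).edges = _
        rw [Walk.edges_map, Walk.edges_transfer]
        rfl
      rw [hedges, CyclicAlt, ← List.map_take, ← List.map_append, List.Chain', List.isChain_map]
      have hmap : ∀ e : Sym2 S, e ∈ N₀.spanningCoe.edgeSet ↔
          Sym2.map (Subtype.val) e ∈ M.edgeSet := by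
        refine Sym2.ind ?_
        intro a b
        simp only [Sym2.map_pair_eq, Subgraph.mem_edgeSet, mem_edgeSet,
          Subgraph.spanningCoe_adj, hN₀adj]
      exact hca.imp (fun {e f} h => by rw [← hmap e, ← hmap f]; exact h)
  refine ⟨⟨N₀, hN₀pm, huniq⟩, Set.diff_subset, ?_⟩
  intro N hN hsub
  by_contra hne
  obtain ⟨x, c, hc⟩ := exists_cycle_of_ne hM hN hne
  have hcyc : (N.spanningCoe ∆ M.spanningCoe).IsCycles :=
    Subgraph.IsPerfectMatching.symmDiff_isCycles hN hM
  have halt : (N.spanningCoe ∆ M.spanningCoe).IsAlternating M.spanningCoe := by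
    have h := symmDiff_isAlternating hM hN
    rwa [symmDiff_comm] at h
  have hca := isCycle_cyclicAlt halt hc
  have hle : N.spanningCoe ∆ M.spanningCoe ≤ G :=
    symmDiff_le' N.spanningCoe_le M.spanningCoe_le
  let c' := c.transfer G (fun e he => (SimpleGraph.edgeSet_mono hle) (c.edges_subset_edgeSet he))
  have hMnotN : ∀ y z, M.Adj y z → ¬ N.Adj y z → y ∈ S := by
    intro y z hMa hNa
    have hMe : s(y, z) ∈ M.edgeSet := Subgraph.mem_edgeSet.mpr hMa
    have hMem : s(y, z) ∈ M' := by
      by_contra hcon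
      exact hNa (Subgraph.mem_edgeSet.mp (hsub ⟨hMe, hcon⟩))
    rw [hS]
    exact ⟨s(y, z), hMem, Sym2.mem_mk_left y z⟩
  refine hno ⟨x, c', hc.transfer _, ?_, ?_⟩
  · intro y hy
    rw [Walk.support_transfer] at hy
    have hyc : ¬ (c.rotate y hy).Nil := (hc.rotate hy).not_nil
    obtain ⟨z, hyz, -, -⟩ := Walk.not_nil_iff.mp hyc
    have hcases : (N.Adj y z ∧ ¬ M.Adj y z) ∨ (M.Adj y z ∧ ¬ N.Adj y z) := by
      simpa only [symmDiff_def, sup_adj, sdiff_adj, Subgraph.spanningCoe_adj] using hyz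
    rcases hcases with ⟨hNa, hMa⟩ | ⟨hMa, hNa⟩
    · obtain ⟨z', hzz', hyz'⟩ := hcyc.other_adj_of_adj hyz
      have h1 : M.spanningCoe.Adj y z ↔ ¬ M.spanningCoe.Adj y z' := halt hzz' hyz hyz'
      simp only [Subgraph.spanningCoe_adj] at h1
      have hMa' : M.Adj y z' := by tauto
      have hNa' : ¬ N.Adj y z' := by
        have hcases' : (N.Adj y z' ∧ ¬ M.Adj y z') ∨ (M.Adj y z' ∧ ¬ N.Adj y z') := by
          simpa only [symmDiff_def, sup_adj, sdiff_adj, Subgraph.spanningCoe_adj] using hyz'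
        tauto
      exact hMnotN y z' hMa' hNa'
    · exact hMnotN y z hMa hNa
  · rw [show c'.edges = c.edges from Walk.edges_transfer c _]
    rwa [spanningCoe_edgeSet] at hca
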